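/- The order on X*Y* defined by u > v ⟺ γ(u^X)u^Y > γ(v^X)v^Y in [X]Y*, or (γ(u^X)u^Y = γ(v^X)v^Y and u^X >_lex v^X), is a monomial order on X*Y*, where the order on [X]Y* is: u > v iff u^Y > v^Y, or (u^Y = v^Y and u^X > v^X), for fixed monomial orders on [X] and Y*. -/

import Mathlib

/-- A monomial order: a well-founded strict total order compatible with multiplication. -/
def MonOrd {M : Type*} [Monoid M] (lt : M → M → Prop) : Prop :=
  IsStrictTotalOrder M lt ∧ WellFounded lt ∧
    ∀ u v w₁ w₂ : M, lt u v → lt (w₁ * u * w₂) (w₁ * v * w₂)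

/-- `m` is the leading word of `f` with respect to the order `lt`. -/
def IsLeadR {k M : Type*} [Semiring k] (lt : M → M → Prop)
    (f : MonoidAlgebra k M) (m : M) : Prop :=
  m ∈ f.coeff.support ∧ ∀ u ∈ f.coeff.support, u ≠ m → lt u m

/-- `f` is monic: its leading coefficient is `1`. -/
def MonicR {k M : Type*} [Semiring k] (lt : M → M → Prop) (f : MonoidAlgebra k M) : Prop :=
  ∃ m, IsLeadR lt f m ∧ f.coeff m = 1

/-- The monomial `m` viewed as an element of the monoid algebra. -/
noncomputable def mono (k : Type*) {M : Type*} [Semiring k] [Monoid M] (m : M) :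
    MonoidAlgebra k M := MonoidAlgebra.of k M m

/-- `h` is trivial modulo `(S, w)`: it is a linear combination `Σ αᵢ aᵢ sᵢ bᵢ`
with `sᵢ ∈ S` and leading words `aᵢ s̄ᵢ bᵢ < w`. -/
def TrivModR {k M : Type*} [Semiring k] [Monoid M] (lt : M → M → Prop)
    (S : Set (MonoidAlgebra k M)) (w : M) (h : MonoidAlgebra k M) : Prop :=
  ∃ (n : ℕ) (α : Fin n → k) (a b : Fin n → M) (s : Fin n → MonoidAlgebra k M),
    (∀ i, s i ∈ S) ∧
    h = ∑ i, α i • (mono k (a i) * s i * mono k (b i)) ∧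
    ∀ i, ∃ m, IsLeadR lt (s i) m ∧ lt (a i * m * b i) w

/-- Gröbner–Shirshov basis in a free associative algebra `k⟨Z⟩`:
all intersection and inclusion compositions are trivial. -/
def FIsGSB {k Z : Type*} [Ring k] (lt : FreeMonoid Z → FreeMonoid Z → Prop)
    (S : Set (MonoidAlgebra k (FreeMonoid Z))) : Prop :=
  (∀ s ∈ S, MonicR lt s) ∧
  ∀ f ∈ S, ∀ g ∈ S, ∀ mf mg : FreeMonoid Z, IsLeadR lt f mf → IsLeadR lt g mg →
    ((∀ a b : FreeMonoid Z, mf * b = a * mg →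
        (mf * b).length < mf.length + mg.length →
        TrivModR lt S (mf * b) (f * mono k b - mono k a * g)) ∧
     (∀ a b : FreeMonoid Z, mf = a * mg * b →
        TrivModR lt S mf (f - mono k a * g * mono k b)))

/-- the deg-lex order on words induced by an order on letters -/
def degLex {A : Type*} (ltA : A → A → Prop) (u v : FreeMonoid A) : Prop :=
  u.length < v.length ∨ (u.length = v.length ∧ List.Lex ltA u.toList v.toList)

/-- Normal words of `k⟨X⟩ ⊗ k⟨Y⟩`: the monoid `X* × Y*`
(whose multiplication is `(u^X u^Y)(v^X v^Y) = u^X v^X u^Y v^Y`). -/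
abbrev NW (X Y : Type*) := FreeMonoid X × FreeMonoid Y

/-- the (deg-)lex order on `N = X*Y*` built from orders on `X*` and `Y*`:
`u > v` iff `u^X > v^X` or (`u^X = v^X` and `u^Y > v^Y`). -/
def lexNW {X Y : Type*} (ltX : FreeMonoid X → FreeMonoid X → Prop)
    (ltY : FreeMonoid Y → FreeMonoid Y → Prop) (u v : NW X Y) : Prop :=
  ltX u.1 v.1 ∨ (u.1 = v.1 ∧ ltY u.2 v.2)

/-- All compositions `(f,g)_w = p` in `k⟨X⟩ ⊗ k⟨Y⟩`, where `mf, mg` are the leading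
words of `f, g`.  The cases are: 1.1 `X`-inclusion only, 1.2 `Y`-inclusion only,
1.3 `X,Y`-inclusion, 1.4 `X,Y`-skew-inclusion, 2.1 `X`-intersection only,
2.2 `Y`-intersection only, 2.3 `X,Y`-intersection, 2.4 `X,Y`-skew-intersection,
3.1 `X`-inclusion and `Y`-intersection, 3.2 `X`-intersection and `Y`-inclusion. -/
def IsComp {k X Y : Type*} [Ring k] (f g : MonoidAlgebra k (NW X Y))
    (mf mg : NW X Y) (p : MonoidAlgebra k (NW X Y)) (w : NW X Y) : Prop :=
  let e : NW X Y → MonoidAlgebra k (NW X Y) := fun m => mono k m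
  let fx := mf.1; let fy := mf.2; let gx := mg.1; let gy := mg.2
  -- 1.1 X-inclusion only
  (∃ (a b : FreeMonoid X) (c : FreeMonoid Y), fx = a * gx * b ∧
     ((w = (fx, fy * c * gy) ∧ p = f * e (1, c * gy) - e (a, fy * c) * g * e (b, 1)) ∨
      (w = (fx, gy * c * fy) ∧ p = e (1, gy * c) * f - e (a, 1) * g * e (b, c * fy)))) ∨
  -- 1.2 Y-inclusion only
  (∃ (a : FreeMonoid X) (c d : FreeMonoid Y), fy = c * gy * d ∧
     ((w = (fx * a * gx, fy) ∧ p = f * e (a * gx, 1) - e (fx * a, c) * g * e (1, d)) ∨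
      (w = (gx * a * fx, fy) ∧ p = e (gx * a, 1) * f - e (1, c) * g * e (a * fx, d)))) ∨
  -- 1.3 X,Y-inclusion
  (∃ (a b : FreeMonoid X) (c d : FreeMonoid Y), fx = a * gx * b ∧ fy = c * gy * d ∧
     w = (fx, fy) ∧ p = f - e (a, c) * g * e (b, d)) ∨
  -- 1.4 X,Y-skew-inclusion
  (∃ (a b : FreeMonoid X) (c d : FreeMonoid Y), fx = a * gx * b ∧ gy = c * fy * d ∧
     w = (fx, gy) ∧ p = e (1, c) * f * e (1, d) - e (a, 1) * g * e (b, 1)) ∨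
  -- 2.1 X-intersection only
  (∃ (a b : FreeMonoid X) (c : FreeMonoid Y), fx * a = b * gx ∧
     (fx * a).length < fx.length + gx.length ∧
     ((w = (fx * a, fy * c * gy) ∧ p = f * e (a, c * gy) - e (b, fy * c) * g) ∨
      (w = (fx * a, gy * c * fy) ∧
        p = e (1, gy * c) * f * e (a, 1) - e (b, 1) * g * e (1, c * fy)))) ∨
  -- 2.2 Y-intersection only
  (∃ (a : FreeMonoid X) (c d : FreeMonoid Y), fy * c = d * gy ∧
     (fy * c).length < fy.length + gy.length ∧
     ((w = (fx * a * gx, fy * c) ∧ p = f * e (a * gx, c) - e (fx * a, d) * g) ∨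
      (w = (gx * a * fx, fy * c) ∧
        p = e (gx * a, 1) * f * e (1, c) - e (1, d) * g * e (a * fx, 1)))) ∨
  -- 2.3 X,Y-intersection
  (∃ (a b : FreeMonoid X) (c d : FreeMonoid Y), fx * a = b * gx ∧ fy * c = d * gy ∧
     (fx * a).length < fx.length + gx.length ∧ (fy * c).length < fy.length + gy.length ∧
     w = (fx * a, fy * c) ∧ p = f * e (a, c) - e (b, d) * g) ∨
  -- 2.4 X,Y-skew-intersection
  (∃ (a b : FreeMonoid X) (c d : FreeMonoid Y), fx * a = b * gx ∧ c * fy = gy * d ∧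
     (fx * a).length < fx.length + gx.length ∧ (c * fy).length < fy.length + gy.length ∧
     w = (fx * a, c * fy) ∧ p = e (1, c) * f * e (a, 1) - e (b, 1) * g * e (1, d)) ∨
  -- 3.1 X-inclusion and Y-intersection
  (∃ (a b : FreeMonoid X) (c d : FreeMonoid Y), fx = a * gx * b ∧
     ((fy * c = d * gy ∧ (fy * c).length < fy.length + gy.length ∧
        w = (fx, fy * c) ∧ p = f * e (1, c) - e (a, d) * g * e (b, 1)) ∨
      (c * fy = gy * d ∧ (c * fy).length < fy.length + gy.length ∧
        w = (fx, c * fy) ∧ p = e (1, c) * f - e (a, 1) * g * e (b, d)))) ∨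
  -- 3.2 X-intersection and Y-inclusion
  (∃ (a b : FreeMonoid X) (c d : FreeMonoid Y), fx * a = b * gx ∧
     (fx * a).length < fx.length + gx.length ∧
     ((fy = c * gy * d ∧ w = (fx * a, fy) ∧ p = f * e (a, 1) - e (b, c) * g * e (1, d)) ∨
      (gy = c * fy * d ∧ w = (fx * a, gy) ∧ p = e (1, c) * f * e (a, d) - e (b, 1) * g)))

/-- Gröbner–Shirshov basis in `k⟨X⟩ ⊗ k⟨Y⟩`: a set of monic polynomials
all of whose compositions are trivial. -/
def IsGSB {k X Y : Type*} [Ring k] (lt : NW X Y → NW X Y → Prop)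
    (S : Set (MonoidAlgebra k (NW X Y))) : Prop :=
  (∀ s ∈ S, MonicR lt s) ∧
  ∀ f ∈ S, ∀ g ∈ S, ∀ (mf mg : NW X Y) (p : MonoidAlgebra k (NW X Y)) (w : NW X Y),
    IsLeadR lt f mf → IsLeadR lt g mg → IsComp f g mf mg p w → TrivModR lt S w p

/-- the abelianization map `γ : X* → [X]`, with `[X]` the free commutative monoid
on `X` realized as `Multiplicative (Multiset X)`. -/
def gam {X : Type*} (u : FreeMonoid X) : Multiplicative (Multiset X) :=
  Multiplicative.ofAdd (↑u.toList : Multiset X)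

/-- the order on `X*` lifted from a monomial order on `[X]`:
`u > v` iff `γ(u) > γ(v)`, or `γ(u) = γ(v)` and `u >_lex v`. -/
def liftOrd {X : Type*} [LinearOrder X]
    (ltC : Multiplicative (Multiset X) → Multiplicative (Multiset X) → Prop)
    (u v : FreeMonoid X) : Prop :=
  ltC (gam u) (gam v) ∨ (gam u = gam v ∧ List.Lex (· < ·) u.toList v.toList)

/-- `δ` on monomials: the weakly increasing word representing a commutative monomial. -/
noncomputable def dword {X : Type*} [LinearOrder X] (m : Multiplicative (Multiset X)) :
    FreeMonoid X :=
  FreeMonoid.ofList (Multiset.sort (Multiplicative.toAdd m) (· ≤ ·))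

/-- the lexicographic splitting `δ : k[X] → k⟨X⟩`. -/
noncomputable def deltaMap {k X : Type*} [Semiring k] [LinearOrder X]
    (f : MonoidAlgebra k (Multiplicative (Multiset X))) :
    MonoidAlgebra k (FreeMonoid X) :=
  MonoidAlgebra.mapDomain dword f

/-- the set `S₁ = {xᵢxⱼ - xⱼxᵢ : xᵢ > xⱼ}` of commutators in `k⟨X⟩`. -/
noncomputable def commSet (k X : Type*) [Ring k] [LinearOrder X] :
    Set (MonoidAlgebra k (FreeMonoid X)) :=
  {p | ∃ i j : X, j < i ∧
    p = mono k (FreeMonoid.of i * FreeMonoid.of j) - mono k (FreeMonoid.of j * FreeMonoid.of i)}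

/-- `U(m)`: commutative monomials in the variables strictly between the least and the
greatest variable occurring in `m`. -/
def UU {X : Type*} [LinearOrder X] (m : Multiplicative (Multiset X)) :
    Set (Multiplicative (Multiset X)) :=
  {u | ∀ y ∈ Multiplicative.toAdd u,
     (∃ z ∈ Multiplicative.toAdd m, z < y) ∧ (∃ z ∈ Multiplicative.toAdd m, y < z)}

/-- Normal words of `k[X] ⊗ k⟨Y⟩`: the monoid `[X]Y*`. -/
abbrev CW (X Y : Type*) := Multiplicative (Multiset X) × FreeMonoid Y

/-- the order on `[X]Y*`: compare the `Y`-part first, then the `[X]`-part. -/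
def cwOrd {X Y : Type*}
    (ltC : Multiplicative (Multiset X) → Multiplicative (Multiset X) → Prop)
    (ltY : FreeMonoid Y → FreeMonoid Y → Prop) (u v : CW X Y) : Prop :=
  ltY u.2 v.2 ∨ (u.2 = v.2 ∧ ltC u.1 v.1)

/-- the order on `X*Y*` lifted from the order on `[X]Y*`, breaking ties by `lex`
on the `X`-component. -/
def liftNW {X Y : Type*} [LinearOrder X]
    (ltC : Multiplicative (Multiset X) → Multiplicative (Multiset X) → Prop)
    (ltY : FreeMonoid Y → FreeMonoid Y → Prop) (u v : NW X Y) : Prop :=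
  cwOrd ltC ltY (gam u.1, u.2) (gam v.1, v.2) ∨
    ((gam u.1 = gam v.1 ∧ u.2 = v.2) ∧ List.Lex (· < ·) u.1.toList v.1.toList)

/-- `δ : k[X] ⊗ k⟨Y⟩ → k⟨X⟩ ⊗ k⟨Y⟩`, the lexicographic splitting extended by the
identity on `Y`-words. -/
noncomputable def deltaNW {k X Y : Type*} [Semiring k] [LinearOrder X]
    (f : MonoidAlgebra k (CW X Y)) : MonoidAlgebra k (NW X Y) :=
  MonoidAlgebra.mapDomain (fun m : CW X Y => ((dword m.1, m.2) : NW X Y)) f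

/-- Mikhalev–Zolotykh compositions in `k[X] ⊗ k⟨Y⟩`: inclusion `C₁`, overlap `C₂`
and external `C₃` compositions, where `mf`, `mg` are the leading words of `f`, `g`,
and `L = lcm(mf^X, mg^X)`. -/
def MZComp {k X Y : Type*} [Ring k] [DecidableEq X]
    (ltC : Multiplicative (Multiset X) → Multiplicative (Multiset X) → Prop)
    (f g : MonoidAlgebra k (CW X Y)) (mf mg : CW X Y)
    (p : MonoidAlgebra k (CW X Y)) (w : CW X Y) : Prop :=
  let e : CW X Y → MonoidAlgebra k (CW X Y) := fun m => mono k m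
  let fX := Multiplicative.toAdd mf.1; let gX := Multiplicative.toAdd mg.1
  let L : Multiset X := fX ∪ gX
  let Lf : Multiplicative (Multiset X) := Multiplicative.ofAdd (L - fX)
  let Lg : Multiplicative (Multiset X) := Multiplicative.ofAdd (L - gX)
  -- C₁ : inclusion
  (∃ c d : FreeMonoid Y, mf.2 = c * mg.2 * d ∧
     (mf.2 = mg.2 → (mg.1 = mf.1 ∨ ltC mg.1 mf.1)) ∧ (mg.2 = 1 → c = 1) ∧
     w = (Multiplicative.ofAdd L, mf.2) ∧
     p = e (Lf, 1) * f - e (Lg, c) * g * e (1, d)) ∨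
  -- C₂ : overlap
  (∃ c d c₀ : FreeMonoid Y, c₀ ≠ 1 ∧ mf.2 = c * c₀ ∧ mg.2 = c₀ * d ∧
     w = (Multiplicative.ofAdd L, mf.2 * d) ∧
     p = e (Lf, 1) * f * e (1, d) - e (Lg, c) * g) ∨
  -- C₃ : external
  (∃ c₀ : FreeMonoid Y, fX ∩ gX ≠ 0 ∧ mf.2 ≠ 1 ∧ mg.2 ≠ 1 ∧
     w = (Multiplicative.ofAdd L, mf.2 * c₀ * mg.2) ∧
     p = e (Lf, 1) * f * e (1, c₀ * mg.2) - e (Lg, mf.2 * c₀) * g)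

/-- Gröbner–Shirshov basis in `k[X] ⊗ k⟨Y⟩` in the sense of Mikhalev–Zolotykh. -/
def MZGSB {k X Y : Type*} [Ring k] [DecidableEq X]
    (ltC : Multiplicative (Multiset X) → Multiplicative (Multiset X) → Prop)
    (ltY : FreeMonoid Y → FreeMonoid Y → Prop)
    (S : Set (MonoidAlgebra k (CW X Y))) : Prop :=
  (∀ s ∈ S, MonicR (cwOrd ltC ltY) s) ∧
  ∀ f ∈ S, ∀ g ∈ S, ∀ (mf mg : CW X Y) (p : MonoidAlgebra k (CW X Y)) (w : CW X Y),
    IsLeadR (cwOrd ltC ltY) f mf → IsLeadR (cwOrd ltC ltY) g mg →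
    MZComp ltC f g mf mg p w → TrivModR (cwOrd ltC ltY) S w p

section StmtFifteenAux

variable {X Y : Type*} [LinearOrder X]

lemma gam_mul' (u v : FreeMonoid X) : gam (u * v) = gam u * gam v := by
  simp only [gam, FreeMonoid.toList_mul]
  rw [← ofAdd_add, Multiset.coe_add]

lemma gam_perm {u v : FreeMonoid X} (h : gam u = gam v) :
    u.toList.Perm v.toList := by
  have : (↑u.toList : Multiset X) = ↑v.toList := Multiplicative.ofAdd.injective h
  exact Multiset.coe_eq_coe.mp this

lemma freeMonoid_toList_inj {u v : FreeMonoid X} (h : u.toList = v.toList) : u = v := by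
  rw [← FreeMonoid.ofList_toList u, ← FreeMonoid.ofList_toList v, h]

lemma lex_append_left' {r : X → X → Prop} (p : List X) {s t : List X}
    (h : List.Lex r s t) : List.Lex r (p ++ s) (p ++ t) := by
  induction p with
  | nil => simpa using h
  | cons a p ih => exact List.Lex.cons ih

lemma lex_append_right' {r : X → X → Prop} {s t : List X} (q : List X)
    (h : List.Lex r s t) (hlen : s.length = t.length) :
    List.Lex r (s ++ q) (t ++ q) := by
  induction h with
  | nil => simp at hlen
  | @cons a l₁ l₂ h ih => exact List.Lex.cons (ih (by simpa using hlen))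
  | rel h => exact List.Lex.rel h

/-- the fiber relation: lex restricted to words with equal abelianization -/
def ltFib (a b : FreeMonoid X) : Prop :=
  gam a = gam b ∧ List.Lex (· < ·) a.toList b.toList

lemma ltFib_wf : WellFounded (ltFib (X := X)) := by
  constructor
  intro a
  have hfin : {b : FreeMonoid X | gam b = gam a}.Finite := by
    apply Set.Finite.subset
      (Set.Finite.image FreeMonoid.ofList (a.toList.permutations.finite_toSet))
    intro b hb
    refine ⟨b.toList, ?_, FreeMonoid.ofList_toList b⟩
    exact List.mem_permutations.mpr (gam_perm hb)
  haveI : IsIrrefl (FreeMonoid X) ltFib :=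
    ⟨fun x h => (irrefl_of (List.Lex ((· < ·) : X → X → Prop)) x.toList) h.2⟩
  haveI : IsTrans (FreeMonoid X) ltFib :=
    ⟨fun x y z h1 h2 => ⟨h1.1.trans h2.1,
      List.lex_trans (fun a b => lt_trans a b) h1.2 h2.2⟩⟩
  haveI : IsStrictOrder (FreeMonoid X) ltFib := {}
  have hwfon := hfin.wellFoundedOn (r := ltFib)
  have key : ∀ b ∈ {b : FreeMonoid X | gam b = gam a}, Acc ltFib b := by
    intro b hb
    refine hwfon.induction hb ?_
    intro y hy ih
    refine Acc.intro _ fun z hz => ih z ?_ hz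
    rw [Set.mem_setOf_eq, hz.1]; exact hy
  exact key a rfl

end StmtFifteenAux

/-- the order on `X*Y*` defined by
`u > v ⟺ γ(u^X)u^Y > γ(v^X)v^Y in [X]Y*, or (γ(u^X)u^Y = γ(v^X)v^Y and u^X >_lex v^X)`
is a monomial order on `X*Y*`, where the order on `[X]Y*` compares the `Y`-part first and
then the `[X]`-part, for fixed monomial orders on `[X]` and `Y*`. -/
theorem stmt_15 {X Y : Type*} [LinearOrder X]
    (hwf : WellFounded ((· < ·) : X → X → Prop))
    (ltC : Multiplicative (Multiset X) → Multiplicative (Multiset X) → Prop)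
    (ltY : FreeMonoid Y → FreeMonoid Y → Prop)
    (hC : MonOrd ltC) (hY : MonOrd ltY) :
    MonOrd (liftNW ltC ltY) := by
  haveI hCi := hC.1
  haveI hYi := hY.1
  have hCt : ∀ a b c, ltC a b → ltC b c → ltC a c := fun a b c => trans_of ltC
  have hYt : ∀ a b c, ltY a b → ltY b c → ltY a c := fun a b c => trans_of ltY
  -- the underlying `cw`-comparison
  set cw : NW X Y → NW X Y → Prop :=
    fun u v => cwOrd ltC ltY (gam u.1, u.2) (gam v.1, v.2) with hcw
  have cw_trans : ∀ u v w, cw u v → cw v w → cw u w := by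
    rintro u v w (h1 | ⟨e1, h1⟩) (h2 | ⟨e2, h2⟩)
    · exact Or.inl (hYt _ _ _ h1 h2)
    · exact Or.inl (e2 ▸ h1)
    · exact Or.inl (e1 ▸ h2)
    · exact Or.inr ⟨e1.trans e2, hCt _ _ _ h1 h2⟩
  have cw_congr : ∀ u v w, gam v.1 = gam w.1 → v.2 = w.2 → cw u v → cw u w := by
    rintro u v w hg hy (h | ⟨e, h⟩)
    · exact Or.inl (hy ▸ h)
    · exact Or.inr ⟨hy ▸ e, hg ▸ h⟩
  have cw_congr' : ∀ u v w, gam u.1 = gam v.1 → u.2 = v.2 → cw v w → cw u w := by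
    rintro u v w hg hy (h | ⟨e, h⟩)
    · exact Or.inl (hy ▸ h)
    · exact Or.inr ⟨hy ▸ e, hg ▸ h⟩
  have cw_irrefl : ∀ u, ¬ cw u u := by
    rintro u (h | ⟨_, h⟩)
    · exact irrefl_of ltY _ h
    · exact irrefl_of ltC _ h
  refine ⟨{ trichotomous := ?_, irrefl := ?_, trans := ?_ }, ?_, ?_⟩
  · intro u v h1 h2
    refine (?_ : liftNW ltC ltY u v ∨ u = v ∨ liftNW ltC ltY v u).elim
      (fun h => absurd h h1) (Or.elim · id (fun h => absurd h h2))
    rcases trichotomous_of ltY u.2 v.2 with hy | hy | hy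
    · exact Or.inl (Or.inl (Or.inl hy))
    · rcases trichotomous_of ltC (gam u.1) (gam v.1) with hg | hg | hg
      · exact Or.inl (Or.inl (Or.inr ⟨hy, hg⟩))
      · rcases trichotomous_of (List.Lex ((· < ·) : X → X → Prop))
          u.1.toList v.1.toList with hl | hl | hl
        · exact Or.inl (Or.inr ⟨⟨hg, hy⟩, hl⟩)
        · exact Or.inr (Or.inl (Prod.ext (freeMonoid_toList_inj hl) hy))
        · exact Or.inr (Or.inr (Or.inr ⟨⟨hg.symm, hy.symm⟩, hl⟩))
      · exact Or.inr (Or.inr (Or.inl (Or.inr ⟨hy.symm, hg⟩)))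
    · exact Or.inr (Or.inr (Or.inl (Or.inl hy)))
  · rintro u (h | ⟨_, h⟩)
    · exact cw_irrefl u h
    · exact irrefl_of (List.Lex ((· < ·) : X → X → Prop)) _ h
  · rintro u v w (h1 | ⟨⟨eg1, ey1⟩, hl1⟩) (h2 | ⟨⟨eg2, ey2⟩, hl2⟩)
    · exact Or.inl (cw_trans _ _ _ h1 h2)
    · exact Or.inl (cw_congr _ _ _ eg2 ey2 h1)
    · exact Or.inl (cw_congr' _ _ _ eg1 ey1 h2)
    · exact Or.inr ⟨⟨eg1.trans eg2, ey1.trans ey2⟩,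
        List.lex_trans (fun a b => lt_trans a b) hl1 hl2⟩
  · -- well-foundedness
    have hwf2 : WellFounded (Prod.Lex (Prod.Lex ltY ltC) (ltFib (X := X))) :=
      ((hY.2.1.prod_lex hC.2.1).prod_lex ltFib_wf)
    have := InvImage.wf
      (fun u : NW X Y => (((u.2, gam u.1) : FreeMonoid Y × Multiplicative (Multiset X)), u.1))
      hwf2
    refine Subrelation.wf ?_ this
    rintro u v (h | ⟨⟨eg, ey⟩, hl⟩)
    · refine Prod.lex_def.mpr (Or.inl ?_)
      rcases h with h | ⟨e, h⟩
      · exact Prod.lex_def.mpr (Or.inl h)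
      · exact Prod.lex_def.mpr (Or.inr ⟨e, h⟩)
    · exact Prod.lex_def.mpr (Or.inr ⟨by simp [ey, eg], eg, hl⟩)
  · -- compatibility with multiplication
    rintro u v w₁ w₂ (h | ⟨⟨eg, ey⟩, hl⟩)
    · refine Or.inl ?_
      rcases h with h | ⟨e, h⟩
      · exact Or.inl (hY.2.2 _ _ _ _ h)
      · refine Or.inr ⟨?_, ?_⟩
        · show w₁.2 * u.2 * w₂.2 = w₁.2 * v.2 * w₂.2
          rw [e]
        · show ltC (gam (w₁.1 * u.1 * w₂.1)) (gam (w₁.1 * v.1 * w₂.1))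
          rw [gam_mul', gam_mul', gam_mul', gam_mul']
          exact hC.2.2 _ _ _ _ h
    · refine Or.inr ⟨⟨?_, ?_⟩, ?_⟩
      · show gam (w₁.1 * u.1 * w₂.1) = gam (w₁.1 * v.1 * w₂.1)
        rw [gam_mul', gam_mul', gam_mul', gam_mul', eg]
      · show w₁.2 * u.2 * w₂.2 = w₁.2 * v.2 * w₂.2
        rw [ey]
      · show List.Lex (· < ·) (w₁.1 * u.1 * w₂.1).toList (w₁.1 * v.1 * w₂.1).toList
        rw [FreeMonoid.toList_mul, FreeMonoid.toList_mul,
            FreeMonoid.toList_mul, FreeMonoid.toList_mul,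
            List.append_assoc, List.append_assoc]
        refine lex_append_left' _ ?_
        exact lex_append_right' _ hl (gam_perm eg).length_eq
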